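/- Let g_0, g_1, ..., g_{n−1} ∈ F_{q^m} be linearly independent over F_q, with m ≥ n. Then the F_{q^m}-linear code generated by the (n−δ+1)×n matrix with rows (g_0^{q^i}, g_1^{q^i}, ..., g_{n−1}^{q^i}) for i = 0,...,n−δ, viewed as m×n matrices over F_q via coordinate expansion, has the property that every nonzero codeword has rank at least δ (Gabidulin codes are MRD). -/

import Mathlib

open Polynomial in
/-- The `q`-polynomial map `x ↦ ∑ uᵢ x^{qⁱ}` is `F_q`-linear. -/
lemma exists_qlin {Fq L : Type*} [Field Fq] [Fintype Fq] [Field L] [Algebra Fq L]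
    {k : ℕ} (u : Fin k → L) :
    ∃ f : L →ₗ[Fq] L, ∀ x, f x = ∑ i, u i * x ^ (Fintype.card Fq ^ (i : ℕ)) := by
  set p := ringChar Fq with hpdef
  haveI : CharP Fq p := ringChar.charP Fq
  obtain ⟨s, hp, hcard⟩ := FiniteField.card Fq p
  haveI : Fact p.Prime := ⟨hp⟩
  haveI : CharP L p := charP_of_injective_algebraMap (algebraMap Fq L).injective p
  have key : ∀ (N : ℕ) (x y : L), (x + y) ^ (Fintype.card Fq ^ N)
      = x ^ (Fintype.card Fq ^ N) + y ^ (Fintype.card Fq ^ N) := by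
    intro N x y
    rw [hcard, ← pow_mul]
    exact add_pow_char_pow x y p (↑s * N)
  have keys : ∀ (N : ℕ) (a : Fq) (x : L), (a • x) ^ (Fintype.card Fq ^ N)
      = a • (x ^ (Fintype.card Fq ^ N)) := by
    intro N a x
    rw [Algebra.smul_def, Algebra.smul_def, mul_pow, ← map_pow,
      FiniteField.pow_card_pow]
  exact ⟨{ toFun := fun x => ∑ i, u i * x ^ (Fintype.card Fq ^ (i : ℕ)),
            map_add' := fun x y => by
              simp only [key, mul_add, Finset.sum_add_distrib],
            map_smul' := fun a x => by
              simp only [keys, mul_smul_comm, RingHom.id_apply, Finset.smul_sum] },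
    fun x => rfl⟩

open Polynomial in
/-- The kernel of a nonzero `q`-polynomial of `q`-degree at most `k-1` has
dimension at most `k-1`. -/
lemma qlin_ker_bound {Fq L : Type*} [Field Fq] [Fintype Fq] [Field L] [Algebra Fq L]
    {k : ℕ} (u : Fin k → L) (hu : u ≠ 0) (f : L →ₗ[Fq] L)
    (hf : ∀ x, f x = ∑ i, u i * x ^ (Fintype.card Fq ^ (i : ℕ))) :
    FiniteDimensional Fq (LinearMap.ker f) ∧
      Module.finrank Fq (LinearMap.ker f) ≤ k - 1 := by
  classical
  set q := Fintype.card Fq with hq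
  have hq1 : 1 < q := Fintype.one_lt_card
  set P : L[X] := ∑ i : Fin k, C (u i) * X ^ (q ^ (i : ℕ)) with hP
  have hPeval : ∀ x : L, P.eval x = f x := by
    intro x
    rw [hf, hP, eval_finset_sum]
    exact Finset.sum_congr rfl fun i _ => by rw [eval_mul, eval_C, eval_pow, eval_X]
  obtain ⟨i0, hi0⟩ := Function.ne_iff.mp hu
  have hcoeff : P.coeff (q ^ (i0 : ℕ)) = u i0 := by
    rw [hP, finset_sum_coeff]
    rw [Finset.sum_eq_single i0]
    · simp
    · intro i _ hi
      rw [coeff_C_mul, coeff_X_pow, if_neg, mul_zero]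
      intro h
      exact hi (Fin.ext (Nat.pow_right_injective hq1 h.symm))
    · simp
  have hP0 : P ≠ 0 := fun h => hi0 (by simpa [h] using hcoeff.symm)
  have hdeg : P.natDegree ≤ q ^ (k - 1) := by
    rw [hP]
    refine natDegree_sum_le_of_forall_le _ _ fun i _ => ?_
    refine (natDegree_C_mul_le _ _).trans ?_
    refine (natDegree_X_pow_le _).trans ?_
    exact Nat.pow_le_pow_right (Nat.one_le_of_lt hq1) (by omega)
  have hsub : (LinearMap.ker f : Set L) ⊆ {x | P.IsRoot x} := by
    intro x hx
    simp only [SetLike.mem_coe, LinearMap.mem_ker] at hx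
    simpa [IsRoot, hPeval] using hx
  have hfin : (LinearMap.ker f : Set L).Finite :=
    (P.finite_setOf_isRoot hP0).subset hsub
  haveI : Finite (LinearMap.ker f) := hfin.to_subtype
  haveI : FiniteDimensional Fq (LinearMap.ker f) := Module.Finite.of_finite
  refine ⟨inferInstance, ?_⟩
  haveI : Fintype (LinearMap.ker f) := Fintype.ofFinite _
  have hcard : Fintype.card (LinearMap.ker f)
      = q ^ Module.finrank Fq (LinearMap.ker f) := Module.card_eq_pow_finrank
  have hle : Fintype.card (LinearMap.ker f) ≤ P.roots.toFinset.card := by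
    have hinj : Function.Injective
        (fun x : LinearMap.ker f => (⟨x.1, by
          rw [Multiset.mem_toFinset, mem_roots hP0]
          exact hsub x.2⟩ : {y // y ∈ P.roots.toFinset})) := by
      intro x y hxy
      have h2 := congrArg Subtype.val hxy
      exact Subtype.ext h2
    simpa using Fintype.card_le_of_injective _ hinj
  have hroots : P.roots.toFinset.card ≤ q ^ (k - 1) :=
    le_trans (le_trans (Multiset.toFinset_card_le _) (P.card_roots')) hdeg
  have : q ^ Module.finrank Fq (LinearMap.ker f) ≤ q ^ (k - 1) := by
    rw [← hcard]; exact hle.trans hroots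
  exact (Nat.pow_le_pow_iff_right hq1).mp this

/-- Expansion `Ψ` of a vector over the extension field `L` into a matrix over `F_q`. -/
noncomputable def expand {Fq L : Type*} [Field Fq] [Field L] [Algebra Fq L]
    {m n : ℕ} (b : Module.Basis (Fin m) Fq L) (v : Fin n → L) :
    Matrix (Fin m) (Fin n) Fq :=
  Matrix.of fun i j => b.repr (v j) i

theorem stmt9 (Fq L : Type*) [Field Fq] [Fintype Fq] [Field L] [Algebra Fq L]
    (m n δ : ℕ) (hδ : 1 ≤ δ) (hδn : δ ≤ n) (hnm : n ≤ m)
    (b : Module.Basis (Fin m) Fq L)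
    (g : Fin n → L) (hg : LinearIndependent Fq g)
    (G : Matrix (Fin (n - δ + 1)) (Fin n) L)
    (hG : ∀ i j, G i j = g j ^ (Fintype.card Fq ^ (i : ℕ))) :
    ∀ u : Fin (n - δ + 1) → L, Matrix.vecMul u G ≠ 0 →
      δ ≤ (expand b (Matrix.vecMul u G)).rank := by
  intro u hu
  classical
  set c : Fin n → L := Matrix.vecMul u G with hc
  obtain ⟨f, hf⟩ := exists_qlin (Fq := Fq) u
  have hu0 : u ≠ 0 := by
    rintro rfl
    exact hu (Matrix.zero_vecMul G)
  have hcg : ∀ j, c j = f (g j) := by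
    intro j
    rw [hf, hc, Matrix.vecMul, dotProduct]
    exact Finset.sum_congr rfl fun i _ => by rw [hG]
  -- the rank of the expansion equals the dimension of the span of the codeword entries
  have hrank : (expand b c).rank = Module.finrank Fq (Submodule.span Fq (Set.range c)) := by
    rw [Matrix.rank_eq_finrank_span_cols]
    have ht : (expand b c).transpose = fun j => b.equivFun (c j) := by
      ext j i
      rfl
    rw [show (expand b c).col = fun j => b.equivFun (c j) from ht]
    have : Set.range (fun j => b.equivFun (c j)) = ⇑b.equivFun '' Set.range c := by
      rw [← Set.range_comp]; rfl
    rw [this, ← LinearEquiv.coe_coe, ← Submodule.map_span]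
    exact LinearEquiv.finrank_map_eq b.equivFun _
  -- the linear map ψ : Fq^n → L sending coefficients to combinations of g
  set ψ : (Fin n → Fq) →ₗ[Fq] L := Fintype.linearCombination Fq g with hψ
  have hψinj : Function.Injective ψ := by
    rw [← LinearMap.ker_eq_bot, LinearMap.ker_eq_bot']
    intro a ha
    funext i
    exact Fintype.linearIndependent_iff.mp hg a ha i
  set Φ : (Fin n → Fq) →ₗ[Fq] L := f.comp ψ with hΦ
  have himg : Set.range c = ⇑f '' Set.range g := by
    rw [← Set.range_comp]
    exact congrArg Set.range (funext hcg)
  have hrange : LinearMap.range Φ = Submodule.span Fq (Set.range c) := by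
    rw [hΦ, LinearMap.range_comp, hψ, Fintype.range_linearCombination, himg,
      Submodule.map_span]
  obtain ⟨hkfin, hkle⟩ := qlin_ker_bound u hu0 f hf
  -- kernel of Φ embeds into kernel of f
  have hker : Module.finrank Fq (LinearMap.ker Φ)
      ≤ Module.finrank Fq (LinearMap.ker f) := by
    have hsub : ∀ x : LinearMap.ker Φ, ψ x.1 ∈ LinearMap.ker f := by
      intro x
      have hx := x.2
      rw [LinearMap.mem_ker] at hx ⊢
      exact hx
    let e : LinearMap.ker Φ →ₗ[Fq] LinearMap.ker f :=
      LinearMap.codRestrict _ (ψ.comp (LinearMap.ker Φ).subtype) fun x => hsub x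
    have heinj : Function.Injective e := by
      intro x y hxy
      have h2 : ψ x.1 = ψ y.1 := Subtype.ext_iff.mp hxy
      exact Subtype.ext (hψinj h2)
    exact LinearMap.finrank_le_finrank_of_injective heinj
  have hrn : Module.finrank Fq (LinearMap.range Φ)
      + Module.finrank Fq (LinearMap.ker Φ) = n := by
    rw [LinearMap.finrank_range_add_finrank_ker, Module.finrank_fin_fun]
  have hk1 : n - δ + 1 - 1 = n - δ := rfl
  rw [hk1] at hkle
  have hfinal : δ ≤ Module.finrank Fq (LinearMap.range Φ) := by omega
  rw [hrank, ← hrange]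
  exact hfinal
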